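/- Let φ(t) = log(2 cosh²(t/2)) and Φ(x) = Σ_{i=1}^n φ(x_i) on ℝ^n. Then det D²Φ = e^{-Φ} and ∇Φ(ℝ^n) = (-1,1)^n. -/

import Mathlib

open Real

noncomputable def myφ : ℝ → ℝ := fun t => Real.log (2 * Real.cosh (t / 2) ^ 2)
noncomputable def myψ : ℝ → ℝ := fun t => Real.tanh (t / 2)
noncomputable def myh : ℝ → ℝ := fun t => (2 * Real.cosh (t / 2) ^ 2)⁻¹

lemma cosh_half_pos (t : ℝ) : 0 < 2 * Real.cosh (t / 2) ^ 2 := by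
  positivity

lemma hasDerivAt_myφ (t : ℝ) : HasDerivAt myφ (myψ t) t := by
  have hc : HasDerivAt (fun t : ℝ => Real.cosh (t / 2)) (Real.sinh (t / 2) * (1 / 2)) t := by
    simpa [Function.comp_def] using (Real.hasDerivAt_cosh (t / 2)).comp t ((hasDerivAt_id t).div_const 2)
  have hu : HasDerivAt (fun t : ℝ => 2 * Real.cosh (t / 2) ^ 2)
      (2 * (2 * Real.cosh (t / 2) * (Real.sinh (t / 2) * (1 / 2)))) t := by
    simpa [mul_comm, mul_assoc, mul_left_comm] using ((hc.pow 2).const_mul 2)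
  have := hu.log (ne_of_gt (cosh_half_pos t))
  refine HasDerivAt.congr_deriv this (Eq.symm ?_)
  have h2 : Real.cosh (t / 2) ≠ 0 := ne_of_gt (Real.cosh_pos _)
  rw [myψ, Real.tanh_eq_sinh_div_cosh]
  field_simp

lemma hasDerivAt_myψ (t : ℝ) : HasDerivAt myψ (myh t) t := by
  have hs : HasDerivAt (fun t : ℝ => Real.sinh (t / 2)) (Real.cosh (t / 2) * (1 / 2)) t := by
    simpa [Function.comp_def] using (Real.hasDerivAt_sinh (t / 2)).comp t ((hasDerivAt_id t).div_const 2)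
  have hc : HasDerivAt (fun t : ℝ => Real.cosh (t / 2)) (Real.sinh (t / 2) * (1 / 2)) t := by
    simpa [Function.comp_def] using (Real.hasDerivAt_cosh (t / 2)).comp t ((hasDerivAt_id t).div_const 2)
  have h2 : Real.cosh (t / 2) ≠ 0 := ne_of_gt (Real.cosh_pos _)
  have := hs.div hc h2
  have heq : ∀ s : ℝ, myψ s = Real.sinh (s / 2) / Real.cosh (s / 2) := fun s => by
    rw [myψ, Real.tanh_eq_sinh_div_cosh]
  rw [show myψ = fun s => Real.sinh (s / 2) / Real.cosh (s / 2) from funext heq]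
  refine HasDerivAt.congr_deriv this (Eq.symm ?_)
  rw [myh]
  have := Real.cosh_sq_sub_sinh_sq (t / 2)
  field_simp
  nlinarith [Real.cosh_pos (t / 2)]

lemma myh_eq (t : ℝ) : myh t = Real.exp (-myφ t) := by
  rw [myh, myφ, Real.exp_neg, Real.exp_log (cosh_half_pos t)]

lemma myψ_mem (t : ℝ) : myψ t ∈ Set.Ioo (-1 : ℝ) 1 := by
  have hc := Real.cosh_pos (t / 2)
  have h1 := Real.cosh_sub_sinh (t / 2)
  have h2 := Real.sinh_add_cosh (t / 2)
  have e1 := Real.exp_pos (-(t / 2))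
  have e2 := Real.exp_pos (t / 2)
  rw [myψ, Real.tanh_eq_sinh_div_cosh]
  constructor
  · rw [neg_lt, ← neg_div, div_lt_one hc]; nlinarith
  · rw [div_lt_one hc]; nlinarith

lemma myψ_surj {y : ℝ} (hy : y ∈ Set.Ioo (-1 : ℝ) 1) :
    myψ (Real.log ((1 + y) / (1 - y))) = y := by
  obtain ⟨hy1, hy2⟩ := hy
  have h1 : (0 : ℝ) < 1 + y := by linarith
  have h2 : (0 : ℝ) < 1 - y := by linarith
  have ha : (0 : ℝ) < (1 + y) / (1 - y) := div_pos h1 h2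
  set s := Real.log ((1 + y) / (1 - y)) / 2 with hs
  have hE : Real.exp s ^ 2 = (1 + y) / (1 - y) := by
    rw [sq, ← Real.exp_add, hs]
    rw [show Real.log ((1 + y) / (1 - y)) / 2 + Real.log ((1 + y) / (1 - y)) / 2
        = Real.log ((1 + y) / (1 - y)) by ring]
    exact Real.exp_log ha
  have hEpos := Real.exp_pos s
  rw [myψ, Real.tanh_eq_sinh_div_cosh, Real.sinh_eq, Real.cosh_eq, Real.exp_neg, ← hs]
  have hE2 : Real.exp s * Real.exp s * (1 - y) = 1 + y := by
    have h' : Real.exp s ^ 2 * (1 - y) = 1 + y := by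
      rw [hE]; field_simp
    nlinarith [h']
  rw [div_eq_iff (by positivity)]
  field_simp
  nlinarith [hE2]
section hess
variable (n : ℕ)

noncomputable def P (i : Fin n) : (Fin n → ℝ) →L[ℝ] ℝ := ContinuousLinearMap.proj i

noncomputable def F (x : Fin n → ℝ) : (Fin n → ℝ) →L[ℝ] ℝ := ∑ i, myψ (x i) • P n i

lemma hF (x : Fin n → ℝ) : HasFDerivAt (fun x : Fin n → ℝ => ∑ i, myφ (x i)) (F n x) x := by
  apply HasFDerivAt.fun_sum
  intro i _
  have := (hasDerivAt_myφ (x i)).comp_hasFDerivAt x (P n i).hasFDerivAt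
  exact this

lemma hF' (x : Fin n → ℝ) :
    HasFDerivAt (F n) (∑ i, (myh (x i) • P n i).smulRight (P n i)) x := by
  rw [show F n = fun x => ∑ i, myψ (x i) • P n i from funext fun x => rfl]
  apply HasFDerivAt.fun_sum
  intro i _
  exact ((hasDerivAt_myψ (x i)).comp_hasFDerivAt x (P n i).hasFDerivAt).smul_const (P n i)

lemma hess (x : Fin n → ℝ) (i j : Fin n) :
    iteratedFDeriv ℝ 2 (fun x : Fin n → ℝ => ∑ i, myφ (x i)) x
      ![Pi.single i 1, Pi.single j 1] = if i = j then myh (x i) else 0 := by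
  rw [iteratedFDeriv_two_apply]
  have h1 : fderiv ℝ (fun x : Fin n → ℝ => ∑ i, myφ (x i)) = F n :=
    funext fun x => (hF n x).fderiv
  rw [h1, (hF' n x).fderiv]
  simp only [ContinuousLinearMap.sum_apply, ContinuousLinearMap.smulRight_apply,
    ContinuousLinearMap.smul_apply, Matrix.cons_val_zero, Matrix.cons_val_one, Matrix.head_cons,
    P, ContinuousLinearMap.proj_apply, smul_eq_mul, Pi.single_apply]
  simp [Finset.sum_ite_eq', mul_comm]
  rcases eq_or_ne i j with h | h
  · subst h; simp
  · simp [h, Ne.symm h]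
end hess
theorem stmt_4 (n : ℕ) :
    let φ : ℝ → ℝ := fun t => Real.log (2 * Real.cosh (t / 2) ^ 2)
    let Φ : (Fin n → ℝ) → ℝ := fun x => ∑ i, φ (x i)
    (∀ x : Fin n → ℝ,
      (Matrix.of fun i j : Fin n =>
        iteratedFDeriv ℝ 2 Φ x ![Pi.single i 1, Pi.single j 1]).det
        = Real.exp (-Φ x)) ∧
    Set.range (fun x : Fin n → ℝ => fun i => deriv φ (x i))
      = Set.univ.pi (fun _ : Fin n => Set.Ioo (-1 : ℝ) 1) := by
  intro φ Φ
  have hφ : φ = myφ := rfl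
  have hΦ : Φ = fun x : Fin n → ℝ => ∑ i, myφ (x i) := rfl
  constructor
  · intro x
    have : (Matrix.of fun i j : Fin n =>
        iteratedFDeriv ℝ 2 Φ x ![Pi.single i 1, Pi.single j 1])
        = Matrix.diagonal (fun i => myh (x i)) := by
      ext i j
      rw [hΦ, Matrix.of_apply, hess n x i j, Matrix.diagonal_apply]
    rw [this, Matrix.det_diagonal, hΦ]
    simp only [myh_eq]
    rw [← Real.exp_sum]
    simp
  · have hd : ∀ t : ℝ, deriv φ t = myψ t := fun t => by
      rw [hφ]; exact (hasDerivAt_myφ t).deriv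
    ext y
    simp only [Set.mem_range, Set.mem_pi, Set.mem_univ, forall_true_left, true_implies]
    constructor
    · rintro ⟨x, rfl⟩ i
      show deriv φ (x i) ∈ _
      rw [hd]; exact myψ_mem (x i)
    · intro hy
      refine ⟨fun i => Real.log ((1 + y i) / (1 - y i)), funext fun i => ?_⟩
      rw [hd]; exact myψ_surj (hy i)
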